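/- arXiv:1205.4442 — 7 statements merged into one kernel-verified Lean document; each statement's English description precedes it below -/
import Mathlib

section
/- The images of K under M_0 and M_1 intersect in exactly one point: M_0(K) ∩ M_1(K) = {(2/5, 2/5, 1/5)}, and this point equals M_0·e_1 = M_1·e_0, where e_0 = (1,0,0) and e_1 = (0,1,0). -/
noncomputable def M0 : Matrix (Fin 3) (Fin 3) ℝ :=
  (1/5 : ℝ) • !![5, 2, 2; 0, 2, 1; 0, 1, 2]

noncomputable def M1 : Matrix (Fin 3) (Fin 3) ℝ :=
  (1/5 : ℝ) • !![2, 0, 1; 2, 5, 2; 1, 0, 2]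

def K : Set (Fin 3 → ℝ) :=
  {v | v 0 + v 1 + v 2 = 1 ∧ ∀ i, 0 ≤ v i}

theorem stmt_5 :
    (M0.mulVec '' K) ∩ (M1.mulVec '' K) = {![2/5, 2/5, 1/5]} ∧
    M0.mulVec ![0, 1, 0] = ![2/5, 2/5, 1/5] ∧
    M1.mulVec ![1, 0, 0] = ![2/5, 2/5, 1/5] := by
  have hpt0 : M0.mulVec ![0, 1, 0] = ![2/5, 2/5, 1/5] := by
    funext i; fin_cases i <;>
      simp [M0, Matrix.mulVec, dotProduct, Fin.sum_univ_three] <;> norm_num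
  have hpt1 : M1.mulVec ![1, 0, 0] = ![2/5, 2/5, 1/5] := by
    funext i; fin_cases i <;>
      simp [M1, Matrix.mulVec, dotProduct, Fin.sum_univ_three] <;> norm_num
  refine ⟨?_, hpt0, hpt1⟩
  ext w
  simp only [Set.mem_inter_iff, Set.mem_image, Set.mem_singleton_iff]
  constructor
  · rintro ⟨⟨v, ⟨hv, hvp⟩, hMv⟩, ⟨u, ⟨hu, hup⟩, hMu⟩⟩
    have e0 := congrFun hMv 0
    have e1 := congrFun hMv 1
    have e2 := congrFun hMv 2
    have f0 := congrFun hMu 0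
    have f1 := congrFun hMu 1
    have f2 := congrFun hMu 2
    simp [M0, Matrix.mulVec, dotProduct, Fin.sum_univ_three] at e0 e1 e2
    simp [M1, Matrix.mulVec, dotProduct, Fin.sum_univ_three] at f0 f1 f2
    have hv0 := hvp 0; have hv1 := hvp 1; have hv2 := hvp 2
    have hu0 := hup 0; have hu1 := hup 1; have hu2 := hup 2
    funext i
    fin_cases i
    · show w 0 = 2/5; linarith
    · show w 1 = 2/5; linarith
    · show w 2 = 1/5; linarith
  · rintro rfl
    constructor
    · exact ⟨![0, 1, 0], ⟨by norm_num [Matrix.cons_val_two], by intro i; fin_cases i <;> norm_num⟩, hpt0⟩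
    · exact ⟨![1, 0, 0], ⟨by norm_num [Matrix.cons_val_two], by intro i; fin_cases i <;> norm_num⟩, hpt1⟩
end

section
/- The cone K⃗ = {a·v⃗_0 + b·v⃗_1 : a,b ≥ 0, (a,b) ≠ (0,0)}, where v⃗_0 = (-1, 1/2, 1/2) and v⃗_1 = (-1/2, 1, -1/2), is stable under both M_0 and M_1. -/
noncomputable def v0 : Fin 3 → ℝ := ![-1, 1/2, 1/2]
noncomputable def v1 : Fin 3 → ℝ := ![-1/2, 1, -1/2]

noncomputable def Kvec : Set (Fin 3 → ℝ) :=
  {u | ∃ a b : ℝ, 0 ≤ a ∧ 0 ≤ b ∧ (a, b) ≠ (0, 0) ∧ u = a • v0 + b • v1}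

theorem stmt_6 :
    (∀ u ∈ Kvec, M0.mulVec u ∈ Kvec) ∧ (∀ u ∈ Kvec, M1.mulVec u ∈ Kvec) := by
  constructor
  · rintro u ⟨a, b, ha, hb, hab, rfl⟩
    refine ⟨3*a/5 + b/5, b/5, by linarith, by linarith, ?_, ?_⟩
    · intro h
      have h1 : 3*a/5 + b/5 = 0 := congrArg Prod.fst h
      have h2 : b/5 = 0 := congrArg Prod.snd h
      refine hab ?_; simp only [Prod.mk.injEq]; constructor <;> linarith
    · funext i
      fin_cases i <;>
        simp [M0, v0, v1, Matrix.mulVec, dotProduct, Fin.sum_univ_three] <;> ring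
  · rintro u ⟨a, b, ha, hb, hab, rfl⟩
    refine ⟨a/5, a/5 + 3*b/5, by linarith, by linarith, ?_, ?_⟩
    · intro h
      have h1 : a/5 = 0 := congrArg Prod.fst h
      have h2 : a/5 + 3*b/5 = 0 := congrArg Prod.snd h
      refine hab ?_; simp only [Prod.mk.injEq]; constructor <;> linarith
    · funext i
      fin_cases i <;>
        simp [M1, v0, v1, Matrix.mulVec, dotProduct, Fin.sum_univ_three] <;> ring
end

section
/- The cone K⃗' = {a·w⃗_0 + b·w⃗_1 : a,b ≥ 0}, where w⃗_0 = (0, 1/2, -1/2) and w⃗_1 = (-1/2, 0, 1/2), is stable under both M_0 and M_1. -/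
noncomputable def w0 : Fin 3 → ℝ := ![0, 1/2, -1/2]
noncomputable def w1 : Fin 3 → ℝ := ![-1/2, 0, 1/2]

noncomputable def Kvec' : Set (Fin 3 → ℝ) :=
  {u | ∃ a b : ℝ, 0 ≤ a ∧ 0 ≤ b ∧ u = a • w0 + b • w1}

theorem stmt_7 :
    (∀ u ∈ Kvec', M0.mulVec u ∈ Kvec') ∧ (∀ u ∈ Kvec', M1.mulVec u ∈ Kvec') := by
  constructor
  · rintro u ⟨a, b, ha, hb, rfl⟩
    refine ⟨a/5 + b/5, 3*b/5, by positivity, by positivity, ?_⟩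
    funext i
    fin_cases i <;>
      simp [M0, w0, w1, Matrix.mulVec, Finset.sum_fin_eq_sum_range,
        Finset.sum_range_succ, dotProduct] <;> ring
  · rintro u ⟨a, b, ha, hb, rfl⟩
    refine ⟨3*a/5, a/5 + b/5, by positivity, by positivity, ?_⟩
    funext i
    fin_cases i <;>
      simp [M1, w0, w1, Matrix.mulVec, Finset.sum_fin_eq_sum_range,
        Finset.sum_range_succ, dotProduct] <;> ring
end

section
/- For any word w ∈ {0,1}^n with n ≥ 1, the restriction of M_w to the plane {x+y+z=0} (a 2×2 linear map) has two distinct positive real eigenvalues λ_w > μ_w > 0 with λ_w·μ_w = (3/25)^n, and the eigenvector for λ_w lies in the cone K⃗ = {a·v⃗_0 + b·v⃗_1 : a,b ≥ 0, (a,b)≠(0,0)}. -/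
noncomputable def Mbit (b : Bool) : Matrix (Fin 3) (Fin 3) ℝ :=
  if b then M1 else M0

noncomputable def Mword (w : List Bool) : Matrix (Fin 3) (Fin 3) ℝ :=
  (w.map Mbit).prod

lemma Mbit_v0v1 (b : Bool) (a c : ℝ) :
    (Mbit b).mulVec (a • v0 + c • v1) =
      (if b then a / 5 else (3*a + c)/5) • v0 + (if b then (a + 3*c)/5 else c/5) • v1 := by
  cases b <;>
  · funext i
    fin_cases i <;>
      simp [Mbit, M0, M1, v0, v1, Matrix.mulVec, dotProduct, Fin.sum_univ_three] <;>
      ring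

noncomputable def TW : List Bool → ℝ × ℝ × ℝ × ℝ
  | [] => (1, 0, 0, 1)
  | b :: w =>
      let P := TW w
      if b then (P.1 / 5, P.2.1 / 5, (P.1 + 3 * P.2.2.1) / 5, (P.2.1 + 3 * P.2.2.2) / 5)
      else ((3 * P.1 + P.2.2.1) / 5, (3 * P.2.1 + P.2.2.2) / 5, P.2.2.1 / 5, P.2.2.2 / 5)

lemma Mword_v0v1 (w : List Bool) (a c : ℝ) :
    (Mword w).mulVec (a • v0 + c • v1) =
      ((TW w).1 * a + (TW w).2.1 * c) • v0 +
      ((TW w).2.2.1 * a + (TW w).2.2.2 * c) • v1 := by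
  induction w generalizing a c with
  | nil =>
      simp [Mword, TW, Matrix.one_mulVec]
  | cons b w ih =>
      have h1 : Mword (b :: w) = Mbit b * Mword w := by
        simp [Mword]
      rw [h1, ← Matrix.mulVec_mulVec, ih, Mbit_v0v1]
      cases b <;> simp only [TW, if_true, if_false, Bool.false_eq_true] <;> module

lemma TW_det (w : List Bool) :
    (TW w).1 * (TW w).2.2.2 - (TW w).2.1 * (TW w).2.2.1 = (3/25 : ℝ) ^ w.length := by
  induction w with
  | nil => simp [TW]
  | cons b w ih =>
      cases b <;>
        simp only [TW, if_true, if_false, Bool.false_eq_true, List.length_cons, pow_succ] <;>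
        linear_combination (3/25 : ℝ) * ih

lemma TW_inv (w : List Bool) (hw : w ≠ []) :
    0 < (TW w).1 ∧ 0 < (TW w).2.2.2 ∧ 0 ≤ (TW w).2.1 ∧ 0 ≤ (TW w).2.2.1 ∧
      ((TW w).2.2.1 = 0 → 0 < (TW w).2.1 ∧ (TW w).2.2.2 < (TW w).1) ∧
      ((TW w).2.1 = 0 → 0 < (TW w).2.2.1 ∧ (TW w).1 < (TW w).2.2.2) := by
  induction w with
  | nil => exact absurd rfl hw
  | cons b w ih =>
      rcases eq_or_ne w [] with h | h
      · subst h
        cases b <;> norm_num [TW]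
      · obtain ⟨hp, hs, hq, hr, h1, h2⟩ := ih h
        cases b <;>
          simp only [TW, if_true, if_false, Bool.false_eq_true]
        · refine ⟨by linarith, by positivity, by positivity, by positivity, ?_, ?_⟩
          · intro h0
            have hr0 : (TW w).2.2.1 = 0 := by linarith
            obtain ⟨h3, h4⟩ := h1 hr0
            constructor <;> linarith
          · intro h0
            have hq' : 0 < (3 * (TW w).2.1 + (TW w).2.2.2) / 5 := by positivity
            exact absurd h0 hq'.ne'
        · refine ⟨by positivity, by linarith, by positivity, by positivity, ?_, ?_⟩
          · intro h0
            have hr' : 0 < ((TW w).1 + 3 * (TW w).2.2.1) / 5 := by positivity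
            exact absurd h0 hr'.ne'
          · intro h0
            have hq0 : (TW w).2.1 = 0 := by linarith
            obtain ⟨h3, h4⟩ := h2 hq0
            constructor <;> linarith

theorem stmt_11 (w : List Bool) (hw : 1 ≤ w.length) :
    ∃ lam mu : ℝ, mu < lam ∧ 0 < mu ∧ lam * mu = (3/25 : ℝ) ^ w.length ∧
      (∃ x ∈ Kvec, (Mword w).mulVec x = lam • x) ∧
      (∃ y : Fin 3 → ℝ, y ≠ 0 ∧ y 0 + y 1 + y 2 = 0 ∧
        (Mword w).mulVec y = mu • y) := by
  have hwne : w ≠ [] := by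
    intro h; rw [h] at hw; simp at hw
  obtain ⟨hp, hs, hq, hr, h1, h2⟩ := TW_inv w hwne
  have hdet := TW_det w
  set p := (TW w).1 with hpd
  set q := (TW w).2.1 with hqd
  set r := (TW w).2.2.1 with hrd
  set s := (TW w).2.2.2 with hsd
  clear_value p q r s
  obtain ⟨D, hDd⟩ : ∃ D : ℝ, D = (p - s)^2 + 4 * (q * r) := ⟨_, rfl⟩
  have hD : 0 < D := by
    rw [hDd]
    rcases hq.lt_or_eq with hq' | hq'
    · rcases hr.lt_or_eq with hr' | hr'
      · nlinarith [sq_nonneg (p - s)]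
      · obtain ⟨h3, h4⟩ := h1 hr'.symm
        nlinarith
    · obtain ⟨h3, h4⟩ := h2 hq'.symm
      nlinarith
  obtain ⟨sq, hsqd⟩ : ∃ t : ℝ, t = Real.sqrt D := ⟨_, rfl⟩
  have hsq2 : sq ^ 2 = D := by rw [hsqd]; exact Real.sq_sqrt hD.le
  have hsq0 : 0 < sq := hsqd ▸ Real.sqrt_pos.mpr hD
  obtain ⟨lam, hld⟩ : ∃ t : ℝ, t = (p + s + sq) / 2 := ⟨_, rfl⟩
  obtain ⟨mu, hmd⟩ : ∃ t : ℝ, t = (p + s - sq) / 2 := ⟨_, rfl⟩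
  have htr : lam + mu = p + s := by rw [hld, hmd]; ring
  have hpm : lam * mu = p * s - q * r := by
    rw [hld, hmd]
    linear_combination (-(1/4) : ℝ) * hsq2 - (1/4 : ℝ) * hDd
  have hlmu : lam * mu = (3/25 : ℝ) ^ w.length := by rw [hpm]; exact hdet
  have hmul : mu < lam := by rw [hld, hmd]; linarith
  have hlam0 : 0 < lam := by rw [hld]; linarith
  have hmu0 : 0 < mu := by
    have hpos : 0 < lam * mu := by rw [hlmu]; positivity
    rcases mul_pos_iff.mp hpos with ⟨_, h⟩ | ⟨h, _⟩
    · exact h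
    · linarith
  have hqr : 0 ≤ q * r := mul_nonneg hq hr
  have hDge : (p - s)^2 ≤ D := by rw [hDd]; linarith
  have hlp : p ≤ lam := by
    have hps : p - s ≤ sq := by
      nlinarith [sq_nonneg (p - s - sq), sq_nonneg (p - s + sq)]
    rw [hld]; linarith
  have hls : s ≤ lam := by
    have hps : s - p ≤ sq := by
      nlinarith [sq_nonneg (s - p - sq), sq_nonneg (s - p + sq)]
    rw [hld]; linarith
  have hcl : lam ^ 2 = (p + s) * lam - (p * s - q * r) := by
    linear_combination lam * htr - hpm
  have hcm : mu ^ 2 = (p + s) * mu - (p * s - q * r) := by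
    linear_combination mu * htr - hpm
  refine ⟨lam, mu, hmul, hmu0, hlmu, ?_, ?_⟩
  · -- eigenvector for lam in the cone
    obtain ⟨a, had⟩ : ∃ t : ℝ, t = q + (lam - s) := ⟨_, rfl⟩
    obtain ⟨b, hbd⟩ : ∃ t : ℝ, t = r + (lam - p) := ⟨_, rfl⟩
    have ha0 : 0 ≤ a := by rw [had]; linarith
    have hb0 : 0 ≤ b := by rw [hbd]; linarith
    have hab : (a, b) ≠ (0, 0) := by
      intro habs
      have ha : a = 0 := congrArg Prod.fst habs
      have hb : b = 0 := congrArg Prod.snd habs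
      rw [had] at ha; rw [hbd] at hb
      have hq0 : q = 0 := by linarith
      have hr0 : r = 0 := by linarith
      have hps : p = s := by linarith
      rw [hDd, hq0, hr0, hps] at hD
      simp at hD
    have e1 : p * a + q * b = lam * a := by
      rw [had, hbd]; linear_combination -hcl
    have e2 : r * a + s * b = lam * b := by
      rw [had, hbd]; linear_combination -hcl
    refine ⟨a • v0 + b • v1, ⟨a, b, ha0, hb0, hab, rfl⟩, ?_⟩
    rw [Mword_v0v1, ← hpd, ← hqd, ← hrd, ← hsd, e1, e2]
    module
  · -- eigenvector for mu in the plane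
    obtain ⟨c, d, hcd, e1, e2⟩ :
        ∃ c d : ℝ, ¬(c = 0 ∧ d = 0) ∧ p * c + q * d = mu * c ∧ r * c + s * d = mu * d := by
      by_cases h : q = 0 ∧ mu = p
      · obtain ⟨hq0, hmp⟩ := h
        refine ⟨mu - s, r, ?_, ?_, by ring⟩
        · rintro ⟨hc, hd⟩
          have hps : p = s := by linarith
          rw [hDd, hq0, hd, hps] at hD
          simp at hD
        · linear_combination (mu - s) * hmp.symm + r * hq0
      · refine ⟨q, mu - p, ?_, by ring, by linear_combination -hcm⟩
        rintro ⟨hc, hd⟩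
        exact h ⟨hc, by linarith⟩
    refine ⟨c • v0 + d • v1, ?_, ?_, ?_⟩
    · intro h0
      have e0 := congrFun h0 0
      have e1' := congrFun h0 1
      simp [v0, v1] at e0 e1'
      exact hcd ⟨by linarith, by linarith⟩
    · simp [v0, v1]; ring
    · rw [Mword_v0v1, ← hpd, ← hqd, ← hrd, ← hsd, e1, e2]
      module
end

section
/- Let f: ℝ² → ℝ² be a linear map given in some basis by a matrix with all entries nonnegative, let C be the closed upper-right quadrant, and let C' = {(x,y) ∈ C \ {0} : m ≤ x/y ≤ M} for fixed 0 < m ≤ M < ∞. Then for all x⃗ ∈ C', with μ = min(m, M⁻¹): μ·‖f‖_∞·‖x⃗‖_∞ ≤ ‖f(x⃗)‖_∞ ≤ 2·‖f‖_∞·‖x⃗‖_∞, where ‖f‖_∞ is the maximum of the matrix entries and ‖·‖_∞ the sup norm. -/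
theorem stmt_14 (a b c d : ℝ) (ha : 0 ≤ a) (hb : 0 ≤ b) (hc : 0 ≤ c) (hd : 0 ≤ d)
    (hne : ¬(a = 0 ∧ b = 0 ∧ c = 0 ∧ d = 0))
    (m M : ℝ) (hm : 0 < m) (hmM : m ≤ M)
    (x y : ℝ) (hx : 0 ≤ x) (hy : 0 ≤ y) (hxy : (x, y) ≠ (0, 0))
    (h1 : m ≤ x / y) (h2 : x / y ≤ M) :
    min m M⁻¹ * max (max a b) (max c d) * max x y ≤
        max (a * x + b * y) (c * x + d * y) ∧
    max (a * x + b * y) (c * x + d * y) ≤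
        2 * max (max a b) (max c d) * max x y := by
  have hy' : 0 < y := by
    rcases hy.lt_or_eq with h | h
    · exact h
    · exfalso; rw [← h, div_zero] at h1; linarith
  have hM : 0 < M := lt_of_lt_of_le hm hmM
  have hxm : m * y ≤ x := by rw [le_div_iff₀ hy'] at h1; linarith
  have hxM : x ≤ M * y := by rw [div_le_iff₀ hy'] at h2; linarith
  set μ := min m M⁻¹ with hμ
  have hμpos : 0 < μ := lt_min hm (inv_pos.mpr hM)
  have hμm : μ ≤ m := min_le_left _ _
  have hμMi : μ ≤ M⁻¹ := min_le_right _ _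
  have hμM : μ * M ≤ 1 := by
    have h := mul_le_mul_of_nonneg_right hμMi (le_of_lt hM)
    rwa [inv_mul_cancel₀ hM.ne'] at h
  have hμ1 : μ ≤ 1 := by
    rcases le_total m 1 with h | h
    · linarith
    · nlinarith
  have hμx : μ * max x y ≤ x := by
    rcases le_total x y with h | h
    · rw [max_eq_right h]; nlinarith
    · rw [max_eq_left h]; nlinarith
  have hμy : μ * max x y ≤ y := by
    rcases le_total x y with h | h
    · rw [max_eq_right h]; nlinarith
    · rw [max_eq_left h]
      have : M⁻¹ * x ≤ y := by
        rw [inv_mul_le_iff₀ hM]; linarith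
      nlinarith
  have key : ∀ p q : ℝ, 0 ≤ p → 0 ≤ q → max p q * (μ * max x y) ≤ p * x + q * y := by
    intro p q hp hq
    rcases le_total p q with h | h
    · rw [max_eq_right h]; nlinarith
    · rw [max_eq_left h]; nlinarith
  constructor
  · have hmaxxy : 0 ≤ max x y := le_trans hx (le_max_left _ _)
    rcases le_total (max a b) (max c d) with h | h
    · rw [max_eq_right h]
      refine le_trans ?_ (le_trans (key c d hc hd) (le_max_right _ _))
      ring_nf; nlinarith [le_max_left c d, le_max_right c d]
    · rw [max_eq_left h]
      refine le_trans ?_ (le_trans (key a b ha hb) (le_max_left _ _))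
      ring_nf; nlinarith [le_max_left a b, le_max_right a b]
  · have hF : 0 ≤ max (max a b) (max c d) := le_trans ha (le_trans (le_max_left _ _) (le_max_left _ _))
    have hax : a ≤ max (max a b) (max c d) := le_trans (le_max_left _ _) (le_max_left _ _)
    have hbx : b ≤ max (max a b) (max c d) := le_trans (le_max_right _ _) (le_max_left _ _)
    have hcx : c ≤ max (max a b) (max c d) := le_trans (le_max_left _ _) (le_max_right _ _)
    have hdx : d ≤ max (max a b) (max c d) := le_trans (le_max_right _ _) (le_max_right _ _)
    have hxle : x ≤ max x y := le_max_left _ _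
    have hyle : y ≤ max x y := le_max_right _ _
    set F := max (max a b) (max c d) with hFdef
    have step : ∀ p q : ℝ, 0 ≤ p → 0 ≤ q → p ≤ F → q ≤ F →
        p * x + q * y ≤ 2 * F * max x y := by
      intro p q hp hq hpF hqF
      have h1' : p * x ≤ F * max x y :=
        mul_le_mul hpF hxle hx hF
      have h2' : q * y ≤ F * max x y :=
        mul_le_mul hqF hyle hy hF
      linarith
    exact max_le (step a b ha hb hax hbx) (step c d hc hd hcx hdx)
end

section
/- Let u: [0,1] → ℝ³ be the unique continuous function with u(0) = (1,0,0), u(1) = (0,1,0), u(t/2) = M_0·u(t), u((t+1)/2) = M_1·u(t). Then u(1−s) = P·u(s) for all s ∈ [0,1], where P is the matrix swapping the first two coordinates. -/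
def P : Matrix (Fin 3) (Fin 3) ℝ := !![0, 1, 0; 1, 0, 0; 0, 0, 1]

/-- `u` is a continuous function on `[0,1]` satisfying the boundary conditions
and the self-similarity relations. -/
def IsHarmonicSide (u : ℝ → (Fin 3 → ℝ)) : Prop :=
  ContinuousOn u (Set.Icc 0 1) ∧
  u 0 = ![1, 0, 0] ∧ u 1 = ![0, 1, 0] ∧
  (∀ t ∈ Set.Icc (0:ℝ) 1, u (t / 2) = M0.mulVec (u t)) ∧
  (∀ t ∈ Set.Icc (0:ℝ) 1, u ((t + 1) / 2) = M1.mulVec (u t))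

/-- Dyadic rationals in `[0,1]`, inductively. -/
inductive Dy : ℝ → Prop
  | zero : Dy 0
  | one : Dy 1
  | half {t : ℝ} : Dy t → Dy (t / 2)
  | half' {t : ℝ} : Dy t → Dy ((t + 1) / 2)

lemma Dy.mem_Icc {t : ℝ} (h : Dy t) : t ∈ Set.Icc (0:ℝ) 1 := by
  induction h with
  | zero => constructor <;> norm_num
  | one => constructor <;> norm_num
  | half h ih => obtain ⟨h1, h2⟩ := ih; constructor <;> [linarith; linarith]
  | half' h ih => obtain ⟨h1, h2⟩ := ih; constructor <;> [linarith; linarith]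

lemma Dy.natCast_div_pow (n : ℕ) : ∀ m : ℕ, m ≤ 2 ^ n → Dy ((m : ℝ) / 2 ^ n) := by
  induction n with
  | zero =>
    intro m hm
    interval_cases m
    · simpa using Dy.zero
    · simpa using Dy.one
  | succ n ih =>
    intro m hm
    by_cases h : m ≤ 2 ^ n
    · have := (ih m h).half
      have e : ((m : ℝ) / 2 ^ n) / 2 = (m : ℝ) / 2 ^ (n + 1) := by
        rw [pow_succ]; ring
      rwa [e] at this
    · push_neg at h
      have hk : m - 2 ^ n ≤ 2 ^ n := by
        have : m ≤ 2 ^ (n + 1) := hm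
        omega
      have := (ih (m - 2 ^ n) hk).half'
      have e : (((m - 2 ^ n : ℕ) : ℝ) / 2 ^ n + 1) / 2 = (m : ℝ) / 2 ^ (n + 1) := by
        have hc : ((m - 2 ^ n : ℕ) : ℝ) = (m : ℝ) - 2 ^ n := by
          push_cast [Nat.cast_sub h.le]; ring
        rw [hc, pow_succ]
        have h2 : (2:ℝ) ^ n ≠ 0 := by positivity
        field_simp
        ring
      rwa [e] at this
  
lemma key1 : M1 * P = P * M0 := by
  ext i j
  fin_cases i <;> fin_cases j <;>
    norm_num [M0, M1, P, Matrix.mul_apply, Fin.sum_univ_three, Matrix.vecHead, Matrix.vecTail, Matrix.cons_val_two]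

lemma key2 : M0 * P = P * M1 := by
  ext i j
  fin_cases i <;> fin_cases j <;>
    norm_num [M0, M1, P, Matrix.mul_apply, Fin.sum_univ_three, Matrix.vecHead, Matrix.vecTail, Matrix.cons_val_two]

lemma M1P_eq_PM0 (x : Fin 3 → ℝ) : M1.mulVec (P.mulVec x) = P.mulVec (M0.mulVec x) := by
  rw [Matrix.mulVec_mulVec, Matrix.mulVec_mulVec, key1]

lemma M0P_eq_PM1 (x : Fin 3 → ℝ) : M0.mulVec (P.mulVec x) = P.mulVec (M1.mulVec x) := by
  rw [Matrix.mulVec_mulVec, Matrix.mulVec_mulVec, key2]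

lemma eq_on_dy (u : ℝ → (Fin 3 → ℝ)) (hu : IsHarmonicSide u) :
    ∀ t, Dy t → u (1 - t) = P.mulVec (u t) := by
  obtain ⟨hc, h0, h1, hM0, hM1⟩ := hu
  intro t ht
  induction ht with
  | zero =>
    rw [sub_zero, h0, h1]
    funext i
    fin_cases i <;>
      norm_num [P, Matrix.mulVec, dotProduct, Fin.sum_univ_three,
        Matrix.vecHead, Matrix.vecTail, Matrix.cons_val_two]
  | one =>
    rw [sub_self, h0, h1]
    funext i
    fin_cases i <;>
      norm_num [P, Matrix.mulVec, dotProduct, Fin.sum_univ_three,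
        Matrix.vecHead, Matrix.vecTail, Matrix.cons_val_two]
  | @half s hs ih =>
    have hsm := hs.mem_Icc
    have hsm' : 1 - s ∈ Set.Icc (0:ℝ) 1 := by
      obtain ⟨a, b⟩ := hsm; constructor <;> linarith
    have e : 1 - s / 2 = ((1 - s) + 1) / 2 := by ring
    rw [e, hM1 _ hsm', ih, hM0 _ hsm, M1P_eq_PM0]
  | @half' s hs ih =>
    have hsm := hs.mem_Icc
    have hsm' : 1 - s ∈ Set.Icc (0:ℝ) 1 := by
      obtain ⟨a, b⟩ := hsm; constructor <;> linarith
    have e : 1 - (s + 1) / 2 = (1 - s) / 2 := by ring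
    rw [e, hM0 _ hsm', ih, hM1 _ hsm, M0P_eq_PM1]

lemma dy_dense : Dense {x : Set.Icc (0:ℝ) 1 | Dy ↑x} := by
  rw [Metric.dense_iff]
  rintro ⟨x, hx0, hx1⟩ r hr
  obtain ⟨n, hn⟩ := exists_pow_lt_of_lt_one hr (by norm_num : (1/2 : ℝ) < 1)
  set m : ℕ := ⌊x * 2 ^ n⌋₊ with hm
  have h2n : (0:ℝ) < 2 ^ n := by positivity
  have hmle : m ≤ 2 ^ n := by
    apply Nat.floor_le_of_le
    calc x * 2 ^ n ≤ 1 * 2 ^ n := by nlinarith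
    _ = ((2 ^ n : ℕ) : ℝ) := by push_cast; ring
  have hd := Dy.natCast_div_pow n m hmle
  have hdm := hd.mem_Icc
  refine ⟨⟨(m : ℝ) / 2 ^ n, hdm⟩, ?_, hd⟩
  rw [Metric.mem_ball, Subtype.dist_eq, Real.dist_eq]
  have hfl : (m : ℝ) ≤ x * 2 ^ n := Nat.floor_le (by positivity)
  have hfu : x * 2 ^ n < m + 1 := Nat.lt_floor_add_one _
  have habs : |(m : ℝ) / 2 ^ n - x| < (1/2) ^ n := by
    rw [abs_sub_lt_iff]
    constructor
    · have : (1/2:ℝ) ^ n = 1 / 2 ^ n := by rw [div_pow]; norm_num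
      rw [this]
      rw [div_sub' (ne_of_gt h2n), div_lt_div_iff₀ h2n h2n]
      nlinarith
    · have : (1/2:ℝ) ^ n = 1 / 2 ^ n := by rw [div_pow]; norm_num
      rw [this]
      rw [sub_div' (ne_of_gt h2n)] at *
      rw [div_lt_div_iff₀ h2n h2n]
      nlinarith
  linarith [habs, hn]

theorem stmt_18 (u : ℝ → (Fin 3 → ℝ)) (hu : IsHarmonicSide u) :
    ∀ s ∈ Set.Icc (0:ℝ) 1, u (1 - s) = P.mulVec (u s) := by
  intro s hs
  have hc := hu.1
  -- the two functions, restricted to Icc 0 1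
  set f : ℝ → (Fin 3 → ℝ) := fun t => u (1 - t) with hf
  set g : ℝ → (Fin 3 → ℝ) := fun t => P.mulVec (u t) with hg
  have hfc : ContinuousOn f (Set.Icc 0 1) := by
    apply hc.comp ((continuous_const.sub continuous_id).continuousOn)
    rintro x ⟨a, b⟩
    constructor <;> simp <;> linarith
  have hgc : ContinuousOn g (Set.Icc 0 1) := by
    exact (Matrix.mulVecLin P).continuous_of_finiteDimensional.comp_continuousOn hc
  have hF : Continuous ((Set.Icc (0:ℝ) 1).restrict f) :=
    continuousOn_iff_continuous_restrict.mp hfc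
  have hG : Continuous ((Set.Icc (0:ℝ) 1).restrict g) :=
    continuousOn_iff_continuous_restrict.mp hgc
  have heq : (Set.Icc (0:ℝ) 1).restrict f = (Set.Icc (0:ℝ) 1).restrict g := by
    apply Continuous.ext_on dy_dense hF hG
    rintro ⟨x, hx⟩ hdx
    exact eq_on_dy u hu x hdx
  have := congrFun heq ⟨s, hs⟩
  exact this
end

section
/- Let u: [0,1] → ℝ³ be the unique continuous function with u(0) = (1,0,0), u(1) = (0,1,0), u(t/2) = M_0·u(t), u((t+1)/2) = M_1·u(t). Then for all s < t in [0,1], the vector u(t) − u(s) lies in the cone K⃗ = {a·v⃗_0 + b·v⃗_1 : a,b ≥ 0, (a,b) ≠ (0,0)} with v⃗_0 = (-1,1/2,1/2), v⃗_1 = (-1/2,1,-1/2); in particular, u is injective. -/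
noncomputable def vcomb (a b : ℝ) : Fin 3 → ℝ := a • v0 + b • v1

lemma vcomb_apply (a b : ℝ) : vcomb a b = ![-a - b/2, a/2 + b, a/2 - b/2] := by
  funext i; fin_cases i <;> simp [vcomb, v0, v1] <;> ring

lemma vcomb_add (a b c d : ℝ) : vcomb a b + vcomb c d = vcomb (a+c) (b+d) := by
  simp only [vcomb_apply]; funext i; fin_cases i <;> simp <;> ring

lemma vcomb_eq_zero {a b : ℝ} (h : vcomb a b = 0) : a = 0 ∧ b = 0 := by
  rw [vcomb_apply] at h
  have h1 := congrFun h 1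
  have h2 := congrFun h 2
  simp at h1 h2
  constructor <;> linarith

lemma M0_vcomb (a b : ℝ) : M0.mulVec (vcomb a b) = vcomb ((3*a+b)/5) (b/5) := by
  simp only [vcomb_apply]
  funext i; fin_cases i <;>
    simp [M0, Matrix.mulVec, dotProduct, Fin.sum_univ_three] <;> ring

lemma M1_vcomb (a b : ℝ) : M1.mulVec (vcomb a b) = vcomb (a/5) ((a+3*b)/5) := by
  simp only [vcomb_apply]
  funext i; fin_cases i <;>
    simp [M1, Matrix.mulVec, dotProduct, Fin.sum_univ_three] <;> ring

def Kc : Set (Fin 3 → ℝ) := {w | w 0 + w 1 + w 2 = 0 ∧ 0 ≤ w 1 + 2 * w 2 ∧ w 2 ≤ w 1}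

lemma isClosed_Kc : IsClosed Kc := by
  have h1 : IsClosed {w : Fin 3 → ℝ | w 0 + w 1 + w 2 = 0} :=
    isClosed_eq (by continuity) continuous_const
  have h2 : IsClosed {w : Fin 3 → ℝ | 0 ≤ w 1 + 2 * w 2} :=
    isClosed_le continuous_const (by continuity)
  have h3 : IsClosed {w : Fin 3 → ℝ | w 2 ≤ w 1} :=
    isClosed_le (continuous_apply 2) (continuous_apply 1)
  have : Kc = {w : Fin 3 → ℝ | w 0 + w 1 + w 2 = 0} ∩
      ({w : Fin 3 → ℝ | 0 ≤ w 1 + 2 * w 2} ∩ {w : Fin 3 → ℝ | w 2 ≤ w 1}) := by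
    ext w; simp [Kc, Set.mem_inter_iff, and_assoc]
  rw [this]; exact h1.inter (h2.inter h3)

lemma vcomb_mem_Kc {a b : ℝ} (ha : 0 ≤ a) (hb : 0 ≤ b) : vcomb a b ∈ Kc := by
  rw [vcomb_apply]
  refine ⟨?_, ?_, ?_⟩ <;> simp <;> linarith

lemma mem_Kc_iff {w : Fin 3 → ℝ} :
    w ∈ Kc ↔ ∃ a b : ℝ, 0 ≤ a ∧ 0 ≤ b ∧ w = vcomb a b := by
  constructor
  · rintro ⟨h1, h2, h3⟩
    refine ⟨(2/3)*(w 1 + 2*w 2), (2/3)*(w 1 - w 2), by linarith, by linarith, ?_⟩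
    rw [vcomb_apply]; funext i; fin_cases i <;> simp <;> linarith
  · rintro ⟨a, b, ha, hb, rfl⟩; exact vcomb_mem_Kc ha hb

/-- strict cone membership -/
def Kpos (w : Fin 3 → ℝ) : Prop :=
  ∃ a b : ℝ, 0 ≤ a ∧ 0 ≤ b ∧ 0 < a + b ∧ w = vcomb a b

lemma Kpos.mem_Kvec {w : Fin 3 → ℝ} (h : Kpos w) : w ∈ Kvec := by
  obtain ⟨a, b, ha, hb, hab, rfl⟩ := h
  refine ⟨a, b, ha, hb, ?_, rfl⟩
  intro hc
  rw [Prod.mk.injEq] at hc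
  rcases hc with ⟨rfl, rfl⟩
  simp at hab

lemma Kpos_add_Kc {w w' : Fin 3 → ℝ} (h : Kpos w) (h' : w' ∈ Kc) : Kpos (w + w') := by
  obtain ⟨a, b, ha, hb, hab, rfl⟩ := h
  obtain ⟨c, d, hc, hd, rfl⟩ := mem_Kc_iff.mp h'
  exact ⟨a+c, b+d, by linarith, by linarith, by linarith, vcomb_add a b c d ▸ rfl⟩

lemma Kc_add_Kpos {w w' : Fin 3 → ℝ} (h : w ∈ Kc) (h' : Kpos w') : Kpos (w + w') := by
  rw [add_comm]; exact Kpos_add_Kc h' h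

/-- dyadic values: the key induction. -/
lemma dyadic_step (u : ℝ → (Fin 3 → ℝ)) (hu : IsHarmonicSide u) :
    ∀ (n : ℕ) (j k : ℕ), j < k → k ≤ 2^n →
      Kpos (u ((k:ℝ)/2^n) - u ((j:ℝ)/2^n)) := by
  obtain ⟨hc, h0, h1, hM0, hM1⟩ := hu
  intro n
  induction n with
  | zero =>
    intro j k hjk hk
    have hk1 : k = 1 := by omega
    have hj0 : j = 0 := by omega
    subst hk1; subst hj0
    refine ⟨2/3, 2/3, by norm_num, by norm_num, by norm_num, ?_⟩
    have e1 : ((1:ℕ):ℝ)/2^(0:ℕ) = 1 := by norm_num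
    have e0 : ((0:ℕ):ℝ)/2^(0:ℕ) = 0 := by norm_num
    rw [e1, e0, h0, h1, vcomb_apply]
    funext i; fin_cases i <;> norm_num
  | succ n ih =>
    have hmemIcc : ∀ m : ℕ, m ≤ 2^n → (m:ℝ)/2^n ∈ Set.Icc (0:ℝ) 1 := by
      intro m hm
      have h2n : (0:ℝ) < 2^n := by positivity
      constructor
      · positivity
      · rw [div_le_one h2n]
        exact_mod_cast hm
    have hA : ∀ j k : ℕ, j < k → k ≤ 2^n →
        Kpos (u ((k:ℝ)/2^(n+1)) - u ((j:ℝ)/2^(n+1))) := by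
      intro j k hjk hk
      have e : ∀ m : ℕ, (m:ℝ)/2^(n+1) = ((m:ℝ)/2^n)/2 := by
        intro m; rw [pow_succ]; ring
      rw [e k, e j, hM0 _ (hmemIcc k hk), hM0 _ (hmemIcc j (le_of_lt (lt_of_lt_of_le hjk hk))),
        ← Matrix.mulVec_sub]
      obtain ⟨a, b, ha, hb, hab, he⟩ := ih j k hjk hk
      rw [he, M0_vcomb]
      exact ⟨_, _, by linarith, by linarith, by linarith, rfl⟩
    have hB : ∀ j k : ℕ, 2^n ≤ j → j < k → k ≤ 2^(n+1) →
        Kpos (u ((k:ℝ)/2^(n+1)) - u ((j:ℝ)/2^(n+1))) := by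
      intro j k hj hjk hk
      have e : ∀ m : ℕ, 2^n ≤ m → m ≤ 2^(n+1) →
          (m:ℝ)/2^(n+1) = (((m - 2^n : ℕ):ℝ)/2^n + 1)/2 := by
        intro m hm hm'
        rw [Nat.cast_sub hm]
        push_cast [pow_succ]
        have h2n : (2:ℝ)^n ≠ 0 := by positivity
        field_simp
        ring
      have hj2 : j ≤ 2^(n+1) := le_of_lt (lt_of_lt_of_le hjk hk)
      have hjs : j - 2^n ≤ 2^n := by omega
      have hks : k - 2^n ≤ 2^n := by
        have : 2^(n+1) = 2^n + 2^n := by rw [pow_succ]; omega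
        omega
      have hjk' : j - 2^n < k - 2^n := by omega
      rw [e k (le_trans hj (le_of_lt hjk)) hk, e j hj hj2,
        hM1 _ (hmemIcc _ hks), hM1 _ (hmemIcc _ hjs), ← Matrix.mulVec_sub]
      obtain ⟨a, b, ha, hb, hab, he⟩ := ih (j - 2^n) (k - 2^n) hjk' hks
      rw [he, M1_vcomb]
      exact ⟨_, _, by linarith, by linarith, by linarith, rfl⟩
    intro j k hjk hk
    rcases le_or_gt k (2^n) with h | h
    · exact hA j k hjk h
    rcases le_or_gt (2^n) j with h' | h'
    · exact hB j k h' hjk hk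
    · have h1' := hA j (2^n) h' le_rfl
      have h2' := hB (2^n) k le_rfl h hk
      have heq : u ((k:ℝ)/2^(n+1)) - u ((j:ℝ)/2^(n+1)) =
          (u (((2^n : ℕ):ℝ)/2^(n+1)) - u ((j:ℝ)/2^(n+1))) +
          (u ((k:ℝ)/2^(n+1)) - u (((2^n : ℕ):ℝ)/2^(n+1))) := by abel
      rw [heq]
      exact Kpos_add_Kc h1' (mem_Kc_iff.mpr (by
        obtain ⟨a, b, ha, hb, _, he⟩ := h2'; exact ⟨a, b, ha, hb, he⟩))


lemma ceil_bounds (s : ℝ) (hs : 0 ≤ s) (hs1 : s ≤ 1) (n : ℕ) :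
    s ≤ ((⌈s * 2^n⌉₊ : ℕ):ℝ)/2^n ∧ ((⌈s * 2^n⌉₊ : ℕ):ℝ)/2^n ≤ s + (1/2)^n ∧
      ⌈s * 2^n⌉₊ ≤ 2^n := by
  have h2n : (0:ℝ) < 2^n := by positivity
  have hx : (0:ℝ) ≤ s * 2^n := by positivity
  have hone : (1/2:ℝ)^n * 2^n = 1 := by
    rw [← mul_pow]; norm_num
  refine ⟨?_, ?_, ?_⟩
  · rw [le_div_iff₀ h2n]; exact Nat.le_ceil _
  · rw [div_le_iff₀ h2n]
    have := Nat.ceil_lt_add_one hx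
    nlinarith
  · rw [Nat.ceil_le]
    push_cast
    nlinarith

lemma floor_bounds (t : ℝ) (ht : 0 ≤ t) (ht1 : t ≤ 1) (n : ℕ) :
    t - (1/2)^n ≤ ((⌊t * 2^n⌋₊ : ℕ):ℝ)/2^n ∧ ((⌊t * 2^n⌋₊ : ℕ):ℝ)/2^n ≤ t ∧
      ⌊t * 2^n⌋₊ ≤ 2^n := by
  have h2n : (0:ℝ) < 2^n := by positivity
  have hx : (0:ℝ) ≤ t * 2^n := by positivity
  have hone : (1/2:ℝ)^n * 2^n = 1 := by
    rw [← mul_pow]; norm_num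
  refine ⟨?_, ?_, ?_⟩
  · rw [le_div_iff₀ h2n]
    have h2 : t * 2^n < ⌊t * 2^n⌋₊ + 1 := Nat.lt_floor_add_one _
    nlinarith
  · rw [div_le_iff₀ h2n]; exact Nat.floor_le hx
  · have : (⌊t * 2^n⌋₊ : ℝ) ≤ ((2^n : ℕ) : ℝ) := by
      push_cast
      calc (⌊t * 2^n⌋₊ : ℝ) ≤ t * 2^n := Nat.floor_le hx
        _ ≤ 2^n := by nlinarith
    exact_mod_cast this

lemma gap_lt {s t : ℝ} (hs : 0 ≤ s) (hst : s < t) {n : ℕ} (hn : 2/(t-s) < 2^n) :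
    ⌈s * 2^n⌉₊ < ⌊t * 2^n⌋₊ := by
  have h2n : (0:ℝ) < 2^n := by positivity
  have hx : (0:ℝ) ≤ s * 2^n := by positivity
  have h1 : (⌈s * 2^n⌉₊ : ℝ) < s * 2^n + 1 := Nat.ceil_lt_add_one hx
  have h2 : t * 2^n < ⌊t * 2^n⌋₊ + 1 := Nat.lt_floor_add_one _
  have h3 : (2:ℝ) < 2^n * (t - s) := (div_lt_iff₀ (by linarith)).mp hn
  have : (⌈s * 2^n⌉₊ : ℝ) < (⌊t * 2^n⌋₊ : ℝ) := by nlinarith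
  exact_mod_cast this


lemma Kc_limit (u : ℝ → (Fin 3 → ℝ)) (hu : IsHarmonicSide u) :
    ∀ s ∈ Set.Icc (0:ℝ) 1, ∀ t ∈ Set.Icc (0:ℝ) 1, s ≤ t → u t - u s ∈ Kc := by
  intro s hs t ht hst
  rcases eq_or_lt_of_le hst with rfl | hlt
  · have h : u s - u s = vcomb 0 0 := by
      rw [sub_self, vcomb_apply]; funext i; fin_cases i <;> norm_num
    rw [h]; exact vcomb_mem_Kc le_rfl le_rfl
  obtain ⟨N, hN⟩ := pow_unbounded_of_one_lt (2/(t-s)) (by norm_num : (1:ℝ) < 2)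
  have half : Filter.Tendsto (fun n : ℕ => (1/2:ℝ)^n) Filter.atTop (nhds 0) :=
    tendsto_pow_atTop_nhds_zero_of_lt_one (by norm_num) (by norm_num)
  have hJb := fun n => ceil_bounds s hs.1 hs.2 n
  have hKb := fun n => floor_bounds t ht.1 ht.2 n
  have hmem : ∀ (m : ℕ) (n : ℕ), m ≤ 2^n → ((m:ℕ):ℝ)/2^n ∈ Set.Icc (0:ℝ) 1 := by
    intro m n hm
    have h2n : (0:ℝ) < 2^n := by positivity
    refine ⟨by positivity, ?_⟩
    rw [div_le_one h2n]; exact_mod_cast hm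
  have htJ : Filter.Tendsto (fun n : ℕ => ((⌈s * 2^n⌉₊ : ℕ):ℝ)/2^n)
      Filter.atTop (nhds s) := by
    refine tendsto_of_tendsto_of_tendsto_of_le_of_le tendsto_const_nhds
      (by simpa using (tendsto_const_nhds (x := s)).add half)
      (fun n => (hJb n).1) (fun n => (hJb n).2.1)
  have htK : Filter.Tendsto (fun n : ℕ => ((⌊t * 2^n⌋₊ : ℕ):ℝ)/2^n)
      Filter.atTop (nhds t) := by
    refine tendsto_of_tendsto_of_tendsto_of_le_of_le
      (by simpa using (tendsto_const_nhds (x := t)).sub half)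
      tendsto_const_nhds
      (fun n => (hKb n).1) (fun n => (hKb n).2.1)
  have hJin : ∀ n : ℕ, ((⌈s * 2^n⌉₊ : ℕ):ℝ)/2^n ∈ Set.Icc (0:ℝ) 1 :=
    fun n => hmem _ n (hJb n).2.2
  have hKin : ∀ n : ℕ, ((⌊t * 2^n⌋₊ : ℕ):ℝ)/2^n ∈ Set.Icc (0:ℝ) 1 :=
    fun n => hmem _ n (hKb n).2.2
  have huJ : Filter.Tendsto (fun n : ℕ => u (((⌈s * 2^n⌉₊ : ℕ):ℝ)/2^n))
      Filter.atTop (nhds (u s)) :=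
    (hu.1 s hs).tendsto.comp
      (tendsto_nhdsWithin_of_tendsto_nhds_of_eventually_within _ htJ
        (Filter.Eventually.of_forall hJin))
  have huK : Filter.Tendsto (fun n : ℕ => u (((⌊t * 2^n⌋₊ : ℕ):ℝ)/2^n))
      Filter.atTop (nhds (u t)) :=
    (hu.1 t ht).tendsto.comp
      (tendsto_nhdsWithin_of_tendsto_nhds_of_eventually_within _ htK
        (Filter.Eventually.of_forall hKin))
  refine isClosed_Kc.mem_of_tendsto (huK.sub huJ) ?_
  rw [Filter.eventually_atTop]
  refine ⟨N, fun n hn => ?_⟩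
  have h2NLE : (2:ℝ)^N ≤ 2^n := pow_le_pow_right₀ (by norm_num) hn
  have hgap : ⌈s * 2^n⌉₊ < ⌊t * 2^n⌋₊ := gap_lt hs.1 hlt (lt_of_lt_of_le hN h2NLE)
  obtain ⟨a, b, ha, hb, _, he⟩ := dyadic_step u hu n _ _ hgap (hKb n).2.2
  rw [he]
  exact vcomb_mem_Kc ha hb


theorem stmt_19 (u : ℝ → (Fin 3 → ℝ)) (hu : IsHarmonicSide u) :
    (∀ s ∈ Set.Icc (0:ℝ) 1, ∀ t ∈ Set.Icc (0:ℝ) 1, s < t →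
      u t - u s ∈ Kvec) ∧
    Set.InjOn u (Set.Icc 0 1) := by
  have key : ∀ s ∈ Set.Icc (0:ℝ) 1, ∀ t ∈ Set.Icc (0:ℝ) 1, s < t →
      Kpos (u t - u s) := by
    intro s hs t ht hlt
    obtain ⟨N, hN⟩ := pow_unbounded_of_one_lt (2/(t-s)) (by norm_num : (1:ℝ) < 2)
    have hJb := ceil_bounds s hs.1 hs.2 N
    have hKb := floor_bounds t ht.1 ht.2 N
    have hgap := gap_lt hs.1 hlt hN
    have h2 := dyadic_step u hu N _ _ hgap hKb.2.2
    have hmem : ∀ (m : ℕ), m ≤ 2^N → ((m:ℕ):ℝ)/2^N ∈ Set.Icc (0:ℝ) 1 := by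
      intro m hm
      have h2n : (0:ℝ) < 2^N := by positivity
      refine ⟨by positivity, ?_⟩
      rw [div_le_one h2n]; exact_mod_cast hm
    have hJin := hmem _ hJb.2.2
    have hKin := hmem _ hKb.2.2
    have h1 : u (((⌈s * 2^N⌉₊ : ℕ):ℝ)/2^N) - u s ∈ Kc :=
      Kc_limit u hu s hs _ hJin hJb.1
    have h3 : u t - u (((⌊t * 2^N⌋₊ : ℕ):ℝ)/2^N) ∈ Kc :=
      Kc_limit u hu _ hKin t ht hKb.2.1
    have heq : u t - u s = (u (((⌈s * 2^N⌉₊ : ℕ):ℝ)/2^N) - u s) +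
        ((u (((⌊t * 2^N⌋₊ : ℕ):ℝ)/2^N) - u (((⌈s * 2^N⌉₊ : ℕ):ℝ)/2^N)) +
         (u t - u (((⌊t * 2^N⌋₊ : ℕ):ℝ)/2^N))) := by abel
    rw [heq]
    exact Kc_add_Kpos h1 (Kpos_add_Kc h2 h3)
  constructor
  · intro s hs t ht hlt
    exact (key s hs t ht hlt).mem_Kvec
  · intro s hs t ht he
    by_contra hne
    rcases lt_or_gt_of_ne hne with h | h
    · obtain ⟨a, b, ha, hb, hab, hzero⟩ := key s hs t ht h
      rw [he, sub_self] at hzero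
      obtain ⟨rfl, rfl⟩ := vcomb_eq_zero hzero.symm
      simp at hab
    · obtain ⟨a, b, ha, hb, hab, hzero⟩ := key t ht s hs h
      rw [he, sub_self] at hzero
      obtain ⟨rfl, rfl⟩ := vcomb_eq_zero hzero.symm
      simp at hab
end
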